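/- Critical remainder R₀ vanishes with the n^{-1} normalization: under the assumptions of the critical CLT ((F), (H3) with α = 1/√2, and 𝔣 = (f_ℓ) satisfying (H3) uniformly), for any nondecreasing sequence (p_n) of positive integers with p_n < n, p_n/n → 1 and n − p_n − λ log n → ∞ for all λ > 0, the quantity R₀(n) = |𝔾_n|^{-1/2} ∑_{k=0}^{n-p_n-1} M_{𝔾_k}(f̃_{n-k}) satisfies lim_{n→∞} n^{-1} E[R₀(n)²] = 0. -/

import Mathlib

open MeasureTheory ProbabilityTheory Filter Finset
open scoped NNReal Topology

noncomputable section

namespace BMC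

variable {S : Type*} [MeasurableSpace S] {Ω : Type*} [MeasurableSpace Ω]

/-- The `n`-th generation `𝔾_n` of the binary tree, as a finset of `List Bool`. -/
def gen (n : ℕ) : Finset (List Bool) :=
  (Finset.univ : Finset (Fin n → Bool)).image List.ofFn

/-- The tree `𝕋_n` up to generation `n`. -/
def treeUpTo (n : ℕ) : Finset (List Bool) :=
  (Finset.range (n + 1)).biUnion gen

/-- The descendants `i𝔾_m` of `i` that are `m` generations below `i`. -/
def desc (i : List Bool) (m : ℕ) : Finset (List Bool) :=
  (gen m).image fun j => i ++ j

/-- `M_A(f) = ∑_{i ∈ A} f(X_i)`. -/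
def MA (X : List Bool → Ω → S) (A : Finset (List Bool)) (f : S → ℝ) (ω : Ω) : ℝ :=
  ∑ i ∈ A, f (X i ω)

/-- Complex-valued version of `M_A(f)`. -/
def MAC (X : List Bool → Ω → S) (A : Finset (List Bool)) (f : S → ℂ) (ω : Ω) : ℂ :=
  ∑ i ∈ A, f (X i ω)

/-- `𝒫(f ⊗ g)(x) = ∫ f(y) g(z) 𝒫(x, dy, dz)`. -/
def Ptens (P : Kernel S (S × S)) (f g : S → ℝ) (x : S) : ℝ :=
  ∫ p, f p.1 * g p.2 ∂(P x)

/-- `𝒫(f ⊗_sym g)(x) = ∫ (f(y) g(z) + g(y) f(z))/2 𝒫(x, dy, dz)`. -/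
def PtensSym (P : Kernel S (S × S)) (f g : S → ℝ) (x : S) : ℝ :=
  ∫ p, (f p.1 * g p.2 + g p.1 * f p.2) / 2 ∂(P x)

/-- Complex version of `𝒫(f ⊗_sym g)`. -/
def PtensSymC (P : Kernel S (S × S)) (f g : S → ℂ) (x : S) : ℂ :=
  ∫ p, (f p.1 * g p.2 + g p.1 * f p.2) / 2 ∂(P x)

/-- The operator `𝒬 f (x) = ∫ (f(y)+f(z))/2 𝒫(x, dy, dz)`, i.e. the action of the
Markov kernel `𝒬 = (P₀ + P₁)/2` on functions. -/
def Qop (P : Kernel S (S × S)) (f : S → ℝ) (x : S) : ℝ :=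
  ∫ p, (f p.1 + f p.2) / 2 ∂(P x)

/-- The iterated operator `𝒬ⁿ`. -/
def Qiter (P : Kernel S (S × S)) (n : ℕ) (f : S → ℝ) : S → ℝ := (Qop P)^[n] f

/-- Complex version of `𝒬`. -/
def QopC (P : Kernel S (S × S)) (f : S → ℂ) (x : S) : ℂ :=
  ∫ p, (f p.1 + f p.2) / 2 ∂(P x)

/-- Complex version of `𝒬ⁿ`. -/
def QiterC (P : Kernel S (S × S)) (n : ℕ) (f : S → ℂ) : S → ℂ := (QopC P)^[n] f

/-- `⟨μ, f⟩ = ∫ f dμ`. -/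
def mInt (μ : Measure S) (f : S → ℝ) : ℝ := ∫ x, f x ∂μ

/-- Complex `⟨μ, f⟩`. -/
def mIntC (μ : Measure S) (f : S → ℂ) : ℂ := ∫ x, f x ∂μ

/-- `f̃ = f - ⟨μ, f⟩`. -/
def ctr (μ : Measure S) (f : S → ℝ) (x : S) : ℝ := f x - mInt μ f

/-- Coercion of a real function to a complex one. -/
def cf (f : S → ℝ) : S → ℂ := fun x => (f x : ℂ)

/-- The σ-field `ℋ_n = σ(X_j, j ∈ 𝕋_n)`. -/
def sigmaTree (X : List Bool → Ω → S) (n : ℕ) : MeasurableSpace Ω :=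
  ⨆ j ∈ treeUpTo n, MeasurableSpace.comap (X j) inferInstance

lemma treeUpTo_mono {a b : ℕ} (h : a ≤ b) : treeUpTo a ⊆ treeUpTo b := by
  intro i hi
  simp only [treeUpTo, Finset.mem_biUnion, Finset.mem_range] at hi ⊢
  obtain ⟨r, hr, hir⟩ := hi
  exact ⟨r, lt_of_lt_of_le hr (by omega), hir⟩

/-- The filtration `(ℋ_n = σ(X_i, i ∈ 𝕋_n))_{n ∈ ℕ}`. -/
def natFiltration (X : List Bool → Ω → S) (hX : ∀ i, Measurable (X i)) :
    Filtration ℕ (inferInstance : MeasurableSpace Ω) where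
  seq n := sigmaTree X n
  mono' := by
    intro a b hab
    exact biSup_mono fun j hj => treeUpTo_mono hab hj
  le' n := by
    refine iSup₂_le fun j _ => ?_
    exact (hX j).comap_le

/-- `X = (X_i, i ∈ 𝕋)` is a bifurcating Markov chain on `(S, 𝒮)` with initial
distribution `ν` and probability kernel `𝒫`, under the probability measure `m` on `Ω`. -/
structure IsBMC (P : Kernel S (S × S)) (ν : Measure S) (m : Measure Ω)
    (X : List Bool → Ω → S) : Prop where
  meas : ∀ i, Measurable (X i)
  init : m.map (X []) = ν
  branching : ∀ (n : ℕ) (g : List Bool → S → S × S → ℝ),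
    (∀ i, Measurable fun q : S × S × S => g i q.1 q.2) →
    (∀ i, ∃ C, ∀ x p, |g i x p| ≤ C) →
    (m[fun ω => ∏ i ∈ gen n, g i (X i ω) (X (i ++ [false]) ω, X (i ++ [true]) ω)
        | sigmaTree X n]
      =ᵐ[m] fun ω => ∏ i ∈ gen n, ∫ p, g i (X i ω) p ∂(P (X i ω)))

/-- Structural Assumption (F) on the set of functions `F`. -/
structure AssumpF (P : Kernel S (S × S)) (ν : Measure S) (F : Set (S → ℝ)) : Prop where
  meas : ∀ f ∈ F, Measurable f
  add_mem : ∀ f ∈ F, ∀ g ∈ F, f + g ∈ F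
  smul_mem : ∀ (c : ℝ), ∀ f ∈ F, c • f ∈ F
  const_mem : ∀ c : ℝ, (fun _ : S => c) ∈ F
  sq_mem : ∀ f ∈ F, (fun x => f x ^ 2) ∈ F
  int_nu : ∀ f ∈ F, Integrable f ν
  tens_int : ∀ f₀ ∈ F, ∀ f₁ ∈ F, ∀ x : S,
    Integrable (fun p : S × S => f₀ p.1 * f₁ p.2) (P x)
  tens_mem : ∀ f₀ ∈ F, ∀ f₁ ∈ F, Ptens P f₀ f₁ ∈ F

/-- Geometric ergodicity Assumption (H2) with rate `α`. -/
structure AssumpH2 (P : Kernel S (S × S)) (F : Set (S → ℝ)) (μ : Measure S) (α : ℝ) :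
    Prop where
  prob : IsProbabilityMeasure μ
  int_mu : ∀ f ∈ F, Integrable f μ
  erg : ∀ f ∈ F, ∃ g ∈ F, ∀ (n : ℕ) (x : S), |Qiter P n f x - mInt μ f| ≤ α ^ n * g x

/-- A sequence `𝔣` satisfies Assumption (H2) uniformly, with dominating function `g`. -/
def UnifH2 (P : Kernel S (S × S)) (μ : Measure S) (α : ℝ) (𝔣 : ℕ → S → ℝ) (g : S → ℝ) :
    Prop :=
  ∀ (n ℓ : ℕ) (x : S), |Qiter P n (𝔣 ℓ) x| ≤ g x ∧
    |Qiter P n (𝔣 ℓ) x - mInt μ (𝔣 ℓ)| ≤ α ^ n * g x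

/-- `N_{n,∅}(𝔣) = |𝔾_n|^{-1/2} ∑_{ℓ=0}^n M_{𝔾_{n-ℓ}}(f̃_ℓ)`. -/
def Nroot (μ : Measure S) (X : List Bool → Ω → S) (𝔣 : ℕ → S → ℝ) (n : ℕ) (ω : Ω) : ℝ :=
  (Real.sqrt (2 ^ n))⁻¹ * ∑ ℓ ∈ Finset.range (n + 1), MA X (gen (n - ℓ)) (ctr μ (𝔣 ℓ)) ω

/-- `N_{n,i}(𝔣) = |𝔾_n|^{-1/2} ∑_{ℓ=0}^{n-|i|} M_{i𝔾_{n-|i|-ℓ}}(f̃_ℓ)`. -/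
def Nni (μ : Measure S) (X : List Bool → Ω → S) (𝔣 : ℕ → S → ℝ) (n : ℕ) (i : List Bool)
    (ω : Ω) : ℝ :=
  (Real.sqrt (2 ^ n))⁻¹ *
    ∑ ℓ ∈ Finset.range (n - i.length + 1), MA X (desc i (n - i.length - ℓ)) (ctr μ (𝔣 ℓ)) ω

/-- Convergence in distribution to a centered Gaussian with variance `v`, expressed by
convergence of integrals of bounded continuous test functions. -/
def TendstoGauss (m : Measure Ω) (Y : ℕ → Ω → ℝ) (v : ℝ≥0) : Prop :=
  ∀ φ : BoundedContinuousFunction ℝ ℝ,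
    Tendsto (fun n => ∫ ω, φ (Y n ω) ∂m) atTop (𝓝 (∫ x, φ x ∂(gaussianReal 0 v)))

/-- Assumption (H3): a second spectral gap, with rate `α`, eigenvalues `(αj j)_{j ∈ J}`
of modulus `α`, projectors `R j`, and speed `β`. -/
structure AssumpH3 (P : Kernel S (S × S)) (F : Set (S → ℝ)) (μ : Measure S) (α : ℝ)
    {J : Type*} [Fintype J] [DecidableEq J] (αj : J → ℂ) (R : J → (S → ℂ) → S → ℂ) (β : ℕ → ℝ) :
    Prop where
  prob : IsProbabilityMeasure μ
  int_mu : ∀ f ∈ F, Integrable f μ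
  nonempty : Nonempty J
  inj : Function.Injective αj
  abs_eq : ∀ j, ‖αj j‖ = α
  Rlin : ∀ (j : J) (c : ℂ) (f g : S → ℂ),
    R j (fun x => c * f x + g x) = fun x => c * R j f x + R j g x
  Rorth : ∀ (j j' : J) (f : S → ℂ), R j (R j' f) = if j = j' then R j f else fun _ => 0
  Rne : ∀ j : J, ∃ f ∈ F, R j (cf f) ≠ fun _ => 0
  Rmeas : ∀ (j : J) (f : S → ℂ), Measurable f → Measurable (R j f)
  Reig : ∀ (j : J) (f : S → ℂ), QopC P (R j f) = fun x => αj j * R j f x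
  βpos : ∀ n, 0 < β n
  βle : ∀ n, β n ≤ 1
  βanti : Antitone β
  βlim : Tendsto β atTop (𝓝 0)
  erg : ∀ f ∈ F, ∃ g ∈ F, ∀ (n : ℕ) (x : S),
    ‖QiterC P n (cf f) x - (mInt μ f : ℂ)
      - (α : ℂ) ^ n * ∑ j, (αj j / (α : ℂ)) ^ n * R j (cf f) x‖ ≤ β n * α ^ n * g x

/-- `f̂ = f̃ - ∑_{j ∈ J} ℛ_j(f)`, as a complex-valued function. -/
def fhat {J : Type*} [Fintype J] (μ : Measure S) (R : J → (S → ℂ) → S → ℂ)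
    (f : S → ℝ) : S → ℂ :=
  fun x => (ctr μ f x : ℂ) - ∑ j, R j (cf f) x

/-- A sequence `𝔣` satisfies Assumption (H3) uniformly, with dominating function `g`. -/
def UnifH3 {J : Type*} [Fintype J] (P : Kernel S (S × S)) (μ : Measure S) (α : ℝ)
    (R : J → (S → ℂ) → S → ℂ) (β : ℕ → ℝ) (𝔣 : ℕ → S → ℝ) (g : S → ℝ) : Prop :=
  ∀ (n ℓ : ℕ) (x : S),
    ‖QiterC P n (cf (𝔣 ℓ)) x‖ ≤ g x ∧
    ‖QiterC P n (cf (ctr μ (𝔣 ℓ))) x‖ ≤ α ^ n * g x ∧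
    ‖QiterC P n (fhat μ R (𝔣 ℓ)) x‖ ≤ β n * α ^ n * g x

/-- `𝒫 f*_{k,ℓ}(x) = ∑_{j ∈ J} θ_j^{ℓ-k} 𝒫(ℛ_j(f_k) ⊗_sym ℛ̄_j(f_ℓ))(x)`, where
`ℛ̄_j(f) = conj (ℛ_j f)` for real `f`. -/
def Pfstar {J : Type*} [Fintype J] (P : Kernel S (S × S)) (α : ℝ) (αj : J → ℂ)
    (R : J → (S → ℂ) → S → ℂ) (𝔣 : ℕ → S → ℝ) (k ℓ : ℕ) (x : S) : ℂ :=
  ∑ j, (αj j / (α : ℂ)) ^ ((ℓ : ℤ) - (k : ℤ)) *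
    PtensSymC P (R j (cf (𝔣 k))) (fun y => starRingEnd ℂ (R j (cf (𝔣 ℓ)) y)) x



/-! ### Auxiliary lemmas for `critical_R0` -/

section Aux
set_option linter.unusedSectionVars false
set_option linter.unusedVariables false

lemma mem_gen {i : List Bool} {n : ℕ} : i ∈ gen n ↔ i.length = n := by
  constructor
  · intro hi
    simp only [gen, Finset.mem_image] at hi
    obtain ⟨f, -, rfl⟩ := hi
    simp
  · intro h
    subst h
    exact Finset.mem_image.2 ⟨i.get, Finset.mem_univ _, List.ofFn_get i⟩

lemma gen_zero : gen 0 = {[]} := by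
  ext i; simp [mem_gen, List.length_eq_zero_iff]

lemma gen_card (n : ℕ) : (gen n).card = 2 ^ n := by
  rw [gen, Finset.card_image_of_injective _ List.ofFn_injective]
  simp

lemma ofFn_snoc {k : ℕ} (g : Fin k → Bool) (b : Bool) :
    List.ofFn (Fin.snoc g b) = List.ofFn g ++ [b] := by
  rw [List.ofFn_succ']
  simp [List.concat_eq_append]

lemma sum_gen_succ (u : List Bool → ℝ) (k : ℕ) :
    ∑ i ∈ gen (k + 1), u i = ∑ i ∈ gen k, (u (i ++ [false]) + u (i ++ [true])) := by
  rw [gen, Finset.sum_image (fun f _ g _ h => List.ofFn_injective h)]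
  rw [← Equiv.sum_comp (Fin.snocEquiv (fun _ => Bool)) (fun f => u (List.ofFn f))]
  rw [Fintype.sum_prod_type, Fintype.sum_bool]
  rw [gen, Finset.sum_image (fun f _ g _ h => List.ofFn_injective h)]
  rw [← Finset.sum_add_distrib]
  refine Finset.sum_congr rfl fun g _ => ?_
  have h1 : (Fin.snocEquiv (fun _ => Bool)) (true, g) = Fin.snoc g true := by
    funext j; simp [Fin.snocEquiv]
  have h2 : (Fin.snocEquiv (fun _ => Bool)) (false, g) = Fin.snoc g false := by
    funext j; simp [Fin.snocEquiv]
  rw [h1, h2, ofFn_snoc, ofFn_snoc]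
  ring

variable {S : Type*} [MeasurableSpace S] {Ω : Type*} [MeasurableSpace Ω]

lemma sigmaTree_le (X : List Bool → Ω → S) (hX : ∀ i, Measurable (X i)) (n : ℕ) :
    sigmaTree X n ≤ (inferInstance : MeasurableSpace Ω) :=
  iSup₂_le fun j _ => (hX j).comap_le

/-- Integrability of bounded measurable functions on finite measure spaces. -/
lemma integrable_of_bdd {T : Type*} [MeasurableSpace T] {μ : Measure T} [IsFiniteMeasure μ]
    {u : T → ℝ} {C : ℝ} (hm : AEStronglyMeasurable u μ) (h : ∀ t, |u t| ≤ C) :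
    Integrable u μ :=
  ⟨hm, MeasureTheory.HasFiniteIntegral.of_bounded (C := C)
    (Filter.Eventually.of_forall fun t => by simpa using h t)⟩

variable (P : Kernel S (S × S)) [IsMarkovKernel P]

lemma qop_meas {h : S → ℝ} (hh : Measurable h) : Measurable (Qop P h) := by
  have : Measurable fun q : S × (S × S) => (h q.2.1 + h q.2.2) / 2 := by
    exact ((hh.comp (measurable_fst.comp measurable_snd)).add
      (hh.comp (measurable_snd.comp measurable_snd))).div_const 2
  exact (this.stronglyMeasurable.integral_kernel_prod_right').measurable

lemma integrable_pair_of_bdd {h : S → ℝ} {C : ℝ} (hh : Measurable h)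
    (hb : ∀ x, |h x| ≤ C) (x : S) :
    Integrable (fun q : S × S => (h q.1 + h q.2) / 2) (P x) := by
  refine integrable_of_bdd (μ := P x) ?_ (C := C) fun q => ?_
  · exact (((hh.comp measurable_fst).add (hh.comp measurable_snd)).div_const
      2).aestronglyMeasurable
  · have := hb q.1; have := hb q.2
    rw [abs_div]
    rw [abs_two]
    rw [div_le_iff₀ (by norm_num)]
    calc |h q.1 + h q.2| ≤ |h q.1| + |h q.2| := abs_add_le _ _
      _ ≤ C * 2 := by linarith

lemma qop_nonneg {h : S → ℝ} {C : ℝ} (hh : Measurable h) (h0 : ∀ x, 0 ≤ h x)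
    (hb : ∀ x, h x ≤ C) (x : S) : 0 ≤ Qop P h x := by
  refine integral_nonneg fun q => ?_
  have := h0 q.1; have := h0 q.2
  positivity

lemma qop_le_const {h : S → ℝ} {C : ℝ} (hh : Measurable h) (h0 : ∀ x, 0 ≤ h x)
    (hb : ∀ x, h x ≤ C) (x : S) : Qop P h x ≤ C := by
  have habs : ∀ x, |h x| ≤ C := fun x => by
    rw [abs_of_nonneg (h0 x)]; exact hb x
  have hC : 0 ≤ C := le_trans (h0 x) (hb x)
  calc Qop P h x ≤ ∫ _, C ∂(P x) := by
        refine integral_mono (integrable_pair_of_bdd P hh habs x) (integrable_const C)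
          fun q => ?_
        have := hb q.1; have := hb q.2
        simp only
        linarith
    _ = C := by simp

lemma qop_mono {u v : S → ℝ} (x : S)
    (hu : Integrable (fun q : S × S => (u q.1 + u q.2) / 2) (P x))
    (hv : Integrable (fun q : S × S => (v q.1 + v q.2) / 2) (P x))
    (huv : ∀ y, u y ≤ v y) : Qop P u x ≤ Qop P v x := by
  refine integral_mono hu hv fun q => ?_
  have := huv q.1; have := huv q.2
  simp only
  linarith

end Aux

section Aux2
set_option linter.unusedSectionVars false
set_option linter.unusedVariables false

variable {S : Type*} [MeasurableSpace S] {Ω : Type*} [MeasurableSpace Ω]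
variable (P : Kernel S (S × S)) [IsMarkovKernel P]

lemma qiter_succ (k : ℕ) (f : S → ℝ) :
    Qiter P (k + 1) f = Qiter P k (Qop P f) :=
  Function.iterate_succ_apply _ _ _

lemma qiter_succ' (k : ℕ) (f : S → ℝ) :
    Qiter P (k + 1) f = Qop P (Qiter P k f) :=
  Function.iterate_succ_apply' _ _ _

lemma qiter_zero (f : S → ℝ) : Qiter P 0 f = f := rfl

variable {ν : Measure S} {F : Set (S → ℝ)}

lemma integrable_pair_of_memF (hF : AssumpF P ν F) {f : S → ℝ} (hf : f ∈ F) (x : S) :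
    Integrable (fun q : S × S => (f q.1 + f q.2) / 2) (P x) := by
  have h1 : Integrable (fun q : S × S => f q.1 * 1) (P x) :=
    hF.tens_int f hf _ (hF.const_mem 1) x
  have h2 : Integrable (fun q : S × S => 1 * f q.2) (P x) :=
    hF.tens_int _ (hF.const_mem 1) f hf x
  simp only [mul_one] at h1
  simp only [one_mul] at h2
  exact (h1.add h2).div_const 2

lemma qop_memF (hF : AssumpF P ν F) {f : S → ℝ} (hf : f ∈ F) : Qop P f ∈ F := by
  have key : Qop P f = (2⁻¹ : ℝ) • (Ptens P f (fun _ => 1) + Ptens P (fun _ => 1) f) := by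
    funext x
    have h1 : Integrable (fun q : S × S => f q.1 * 1) (P x) :=
      hF.tens_int f hf _ (hF.const_mem 1) x
    have h2 : Integrable (fun q : S × S => 1 * f q.2) (P x) :=
      hF.tens_int _ (hF.const_mem 1) f hf x
    calc Qop P f x = ∫ q, (f q.1 * 1 + 1 * f q.2) / 2 ∂(P x) := by
          unfold Qop; congr 1; funext q; ring
      _ = (∫ q, (f q.1 * 1 + 1 * f q.2) ∂(P x)) / 2 := integral_div _ _
      _ = ((∫ q, f q.1 * 1 ∂(P x)) + ∫ q, 1 * f q.2 ∂(P x)) / 2 := by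
          rw [integral_add h1 h2]
      _ = ((2⁻¹ : ℝ) • (Ptens P f (fun _ => 1) + Ptens P (fun _ => 1) f)) x := by
          simp only [Pi.smul_apply, Pi.add_apply, smul_eq_mul, Ptens]; ring
  rw [key]
  exact hF.smul_mem _ _ (hF.add_mem _ (hF.tens_mem f hf _ (hF.const_mem 1)) _
    (hF.tens_mem _ (hF.const_mem 1) f hf))

lemma qiter_memF (hF : AssumpF P ν F) {f : S → ℝ} (hf : f ∈ F) (k : ℕ) :
    Qiter P k f ∈ F := by
  induction k with
  | zero => exact hf
  | succ k ih => rw [qiter_succ']; exact qop_memF P hF ih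

lemma qopC_cf (f : S → ℝ) : QopC P (cf f) = cf (Qop P f) := by
  funext x
  show (∫ q, (cf f q.1 + cf f q.2) / 2 ∂(P x)) = (((∫ q, (f q.1 + f q.2) / 2 ∂(P x)) : ℝ) : ℂ)
  have : ((((∫ q, (f q.1 + f q.2) / 2 ∂(P x)) : ℝ)) : ℂ)
      = ∫ q, (((f q.1 + f q.2) / 2 : ℝ) : ℂ) ∂(P x) := (integral_ofReal (𝕜 := ℂ)).symm
  rw [this]
  congr 1
  funext q
  simp only [cf]
  push_cast
  ring

lemma qiterC_cf (k : ℕ) (f : S → ℝ) : QiterC P k (cf f) = cf (Qiter P k f) := by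
  induction k with
  | zero => rfl
  | succ k ih =>
    have h1 : QiterC P (k + 1) (cf f) = QopC P (QiterC P k (cf f)) :=
      Function.iterate_succ_apply' _ _ _
    rw [h1, ih, qopC_cf, qiter_succ']

end Aux2

section Aux3
set_option linter.unusedSectionVars false
set_option linter.unusedVariables false

variable {S : Type*} [MeasurableSpace S] {Ω : Type*} [MeasurableSpace Ω]
variable {P : Kernel S (S × S)} [IsMarkovKernel P] {ν : Measure S} [IsProbabilityMeasure ν]
variable {m : Measure Ω} [IsProbabilityMeasure m] {X : List Bool → Ω → S}

lemma integral_pair_eq_two_qop (h : S → ℝ) (x : S) :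
    ∫ p, (h p.1 + h p.2) ∂(P x) = 2 * Qop P h x := by
  unfold Qop
  rw [← integral_const_mul]
  congr 1; funext p; ring

lemma step_int (hBMC : IsBMC P ν m X) {k : ℕ} {i₀ : List Bool} (hi₀ : i₀ ∈ gen k)
    {h : S → ℝ} {C : ℝ} (hh : Measurable h) (h0 : ∀ x, 0 ≤ h x) (hC : ∀ x, h x ≤ C) :
    ∫ ω, (h (X (i₀ ++ [false]) ω) + h (X (i₀ ++ [true]) ω)) ∂m
      = ∫ ω, 2 * Qop P h (X i₀ ω) ∂m := by
  classical
  have habs : ∀ x, |h x| ≤ C := fun x => by rw [abs_of_nonneg (h0 x)]; exact hC x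
  set G : List Bool → S → S × S → ℝ := fun i x p => if i = i₀ then h p.1 + h p.2 else 1 with hG
  have hmeas : ∀ i, Measurable fun q : S × S × S => G i q.1 q.2 := by
    intro i
    by_cases hd : i = i₀
    · simp only [hG, if_pos hd]
      exact (hh.comp (measurable_fst.comp measurable_snd)).add
        (hh.comp (measurable_snd.comp measurable_snd))
    · simp only [hG, if_neg hd]; exact measurable_const
  have hbdd : ∀ i, ∃ C', ∀ x p, |G i x p| ≤ C' := by
    intro i
    refine ⟨max (2 * C) 1, fun x p => ?_⟩
    by_cases hd : i = i₀
    · simp only [hG, if_pos hd]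
      calc |h p.1 + h p.2| ≤ |h p.1| + |h p.2| := abs_add_le _ _
        _ ≤ 2 * C := by have := habs p.1; have := habs p.2; linarith
        _ ≤ _ := le_max_left _ _
    · simp only [hG, if_neg hd, abs_one]; exact le_max_right _ _
  have hbr := hBMC.branching k G hmeas hbdd
  have hle : sigmaTree X k ≤ (inferInstance : MeasurableSpace Ω) := sigmaTree_le X hBMC.meas k
  have hprod : (fun ω => ∏ i ∈ gen k, G i (X i ω) (X (i ++ [false]) ω, X (i ++ [true]) ω))
      = fun ω => h (X (i₀ ++ [false]) ω) + h (X (i₀ ++ [true]) ω) := by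
    funext ω
    simp only [hG]
    rw [Finset.prod_ite_eq' (gen k) i₀
      (fun i => h (X (i ++ [false]) ω) + h (X (i ++ [true]) ω)), if_pos hi₀]
  have hrhs : (fun ω => ∏ i ∈ gen k, ∫ p, G i (X i ω) p ∂(P (X i ω)))
      = fun ω => 2 * Qop P h (X i₀ ω) := by
    funext ω
    have hterm : ∀ i ∈ gen k, (∫ p, G i (X i ω) p ∂(P (X i ω)))
        = if i = i₀ then 2 * Qop P h (X i ω) else 1 := by
      intro i _
      by_cases hd : i = i₀
      · simp only [hG, if_pos hd]
        exact integral_pair_eq_two_qop h (X i ω)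
      · simp only [hG, if_neg hd]
        simp
    rw [Finset.prod_congr rfl hterm,
      Finset.prod_ite_eq' (gen k) i₀ (fun i => 2 * Qop P h (X i ω)), if_pos hi₀]
  have hkey : ∫ ω, (∏ i ∈ gen k, G i (X i ω) (X (i ++ [false]) ω, X (i ++ [true]) ω)) ∂m
      = ∫ ω, (∏ i ∈ gen k, ∫ p, G i (X i ω) p ∂(P (X i ω))) ∂m := by
    rw [← integral_condExp hle]
    exact integral_congr_ae hbr
  rw [hprod, hrhs] at hkey
  exact hkey

lemma many2one (hBMC : IsBMC P ν m X) (k : ℕ) :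
    ∀ (h : S → ℝ) (C : ℝ), Measurable h → (∀ x, 0 ≤ h x) → (∀ x, h x ≤ C) →
    ∫ ω, ∑ i ∈ gen k, h (X i ω) ∂m = 2 ^ k * ∫ x, Qiter P k h x ∂ν := by
  induction k with
  | zero =>
    intro h C hh h0 hC
    simp only [gen_zero, Finset.sum_singleton, pow_zero, one_mul, qiter_zero]
    rw [← hBMC.init, integral_map (hBMC.meas []).aemeasurable hh.aestronglyMeasurable]
  | succ k ih =>
    intro h C hh h0 hC
    have habs : ∀ x, |h x| ≤ C := fun x => by rw [abs_of_nonneg (h0 x)]; exact hC x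
    have hint : ∀ i : List Bool, Integrable (fun ω => h (X i ω)) m := fun i =>
      integrable_of_bdd ((hh.comp (hBMC.meas i)).aestronglyMeasurable) (fun ω => habs _)
    have hQmeas : Measurable (Qop P h) := qop_meas P hh
    have hQ0 : ∀ x, 0 ≤ Qop P h x := fun x => qop_nonneg P hh h0 hC x
    have hQC : ∀ x, Qop P h x ≤ C := fun x => qop_le_const P hh h0 hC x
    calc ∫ ω, ∑ i ∈ gen (k + 1), h (X i ω) ∂m
        = ∫ ω, ∑ i ∈ gen k, (h (X (i ++ [false]) ω) + h (X (i ++ [true]) ω)) ∂m := by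
          congr 1; funext ω; exact sum_gen_succ (fun i => h (X i ω)) k
      _ = ∑ i ∈ gen k, ∫ ω, (h (X (i ++ [false]) ω) + h (X (i ++ [true]) ω)) ∂m :=
          integral_finset_sum _ (fun i _ => (hint _).add (hint _))
      _ = ∑ i ∈ gen k, ∫ ω, 2 * Qop P h (X i ω) ∂m :=
          Finset.sum_congr rfl (fun i hi => step_int hBMC hi hh h0 hC)
      _ = 2 * ∑ i ∈ gen k, ∫ ω, Qop P h (X i ω) ∂m := by
          rw [Finset.mul_sum]
          exact Finset.sum_congr rfl fun i _ => integral_const_mul 2 _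
      _ = 2 * ∫ ω, ∑ i ∈ gen k, Qop P h (X i ω) ∂m := by
          congr 1
          exact (integral_finset_sum (gen k) (f := fun i ω => Qop P h (X i ω))
            (fun i _ => integrable_of_bdd
              ((hQmeas.comp (hBMC.meas i)).aestronglyMeasurable)
              (fun ω => by rw [abs_of_nonneg (hQ0 _)]; exact hQC _))).symm
      _ = 2 * (2 ^ k * ∫ x, Qiter P k (Qop P h) x ∂ν) := by
          rw [ih (Qop P h) C hQmeas hQ0 hQC]
      _ = 2 ^ (k + 1) * ∫ x, Qiter P (k + 1) h x ∂ν := by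
          rw [qiter_succ]; ring

end Aux3

section Aux4
set_option linter.unusedSectionVars false
set_option linter.unusedVariables false

variable {S : Type*} [MeasurableSpace S] {Ω : Type*} [MeasurableSpace Ω]
variable {P : Kernel S (S × S)} [IsMarkovKernel P] {ν : Measure S} [IsProbabilityMeasure ν]
variable {m : Measure Ω} [IsProbabilityMeasure m] {X : List Bool → Ω → S}
variable {F : Set (S → ℝ)}

lemma trunc_facts (hF : AssumpF P ν F) {φ : S → ℝ} (hφF : φ ∈ F) (hφ0 : ∀ x, 0 ≤ φ x)
    {M : ℝ} (hM : 0 ≤ M) (j : ℕ) :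
    Measurable (Qiter P j (fun x => min (φ x) M)) ∧
    (∀ x, 0 ≤ Qiter P j (fun x => min (φ x) M) x) ∧
    (∀ x, Qiter P j (fun x => min (φ x) M) x ≤ M) ∧
    (∀ x, Qiter P j (fun x => min (φ x) M) x ≤ Qiter P j φ x) := by
  induction j with
  | zero =>
    exact ⟨(hF.meas φ hφF).min measurable_const, fun x => le_min (hφ0 x) hM,
      fun x => min_le_right _ _, fun x => min_le_left _ _⟩
  | succ j ih =>
    obtain ⟨hm, h0, hM', hle⟩ := ih
    rw [qiter_succ' P j (fun x => min (φ x) M)]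
    refine ⟨qop_meas P hm, fun x => qop_nonneg P hm h0 hM' x,
      fun x => qop_le_const P hm h0 hM' x, fun x => ?_⟩
    rw [qiter_succ' P j φ]
    refine qop_mono P x (integrable_pair_of_bdd P hm (C := M) (fun y => by
      rw [abs_of_nonneg (h0 y)]; exact hM' y) x)
      (integrable_pair_of_memF P hF (qiter_memF P hF hφF j) x) hle

lemma lintegral_gen_le (hBMC : IsBMC P ν m X) (hF : AssumpF P ν F) {φ : S → ℝ}
    (hφF : φ ∈ F) (hφ0 : ∀ x, 0 ≤ φ x) (k : ℕ) :
    ∫⁻ ω, ENNReal.ofReal (∑ i ∈ gen k, φ (X i ω)) ∂m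
      ≤ ENNReal.ofReal (2 ^ k * ∫ x, Qiter P k φ x ∂ν) := by
  have hφm : Measurable φ := hF.meas φ hφF
  set f : ℕ → Ω → ENNReal :=
    fun M ω => ENNReal.ofReal (∑ i ∈ gen k, min (φ (X i ω)) (M : ℝ)) with hf
  have hmeas : ∀ M : ℕ, Measurable (f M) := fun M => by
    apply Measurable.ennreal_ofReal
    exact Finset.measurable_sum _ fun i _ =>
      ((hφm.comp (hBMC.meas i)).min measurable_const)
  have hmono : ∀ ω, Monotone fun M : ℕ => f M ω := by
    intro ω M M' hMM'
    apply ENNReal.ofReal_le_ofReal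
    exact Finset.sum_le_sum fun i _ => min_le_min le_rfl (by exact_mod_cast hMM')
  have htend : ∀ ω, Tendsto (fun M : ℕ => f M ω) atTop
      (𝓝 (ENNReal.ofReal (∑ i ∈ gen k, φ (X i ω)))) := by
    intro ω
    apply ENNReal.tendsto_ofReal
    refine tendsto_finset_sum _ fun i _ => ?_
    apply tendsto_atTop_of_eventually_const (i₀ := Nat.ceil (φ (X i ω)))
    intro M hM
    exact min_eq_left ((Nat.le_ceil _).trans (Nat.cast_le.2 hM))
  have hlim := lintegral_tendsto_of_tendsto_of_monotone (μ := m)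
    (fun M => (hmeas M).aemeasurable) (ae_of_all _ hmono) (ae_of_all _ htend)
  refine le_of_tendsto hlim (Filter.Eventually.of_forall fun M => ?_)
  have hminmeas : Measurable fun x => min (φ x) (M : ℝ) := hφm.min measurable_const
  have hmin0 : ∀ x, 0 ≤ min (φ x) (M : ℝ) := fun x => le_min (hφ0 x) (Nat.cast_nonneg M)
  have hminM : ∀ x, min (φ x) (M : ℝ) ≤ (M : ℝ) := fun x => min_le_right _ _
  have hint : Integrable (fun ω => ∑ i ∈ gen k, min (φ (X i ω)) (M : ℝ)) m :=
    integrable_finset_sum _ fun i _ => integrable_of_bdd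
      ((hminmeas.comp (hBMC.meas i)).aestronglyMeasurable)
      (C := M) (fun ω => by rw [abs_of_nonneg (hmin0 _)]; exact hminM _)
  have h1 : ∫⁻ ω, f M ω ∂m
      = ENNReal.ofReal (∫ ω, ∑ i ∈ gen k, min (φ (X i ω)) (M : ℝ) ∂m) :=
    (ofReal_integral_eq_lintegral_ofReal hint
      (ae_of_all _ fun ω => Finset.sum_nonneg fun i _ => hmin0 _)).symm
  rw [h1, many2one hBMC k (fun x => min (φ x) (M : ℝ)) (M : ℝ) hminmeas hmin0 hminM]
  apply ENNReal.ofReal_le_ofReal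
  have hfacts := trunc_facts hF hφF hφ0 (Nat.cast_nonneg M : (0:ℝ) ≤ M) k
  refine mul_le_mul_of_nonneg_left ?_ (by positivity)
  refine integral_mono (integrable_of_bdd (hfacts.1).aestronglyMeasurable (C := M)
    (fun x => by rw [abs_of_nonneg (hfacts.2.1 x)]; exact hfacts.2.2.1 x))
    (hF.int_nu _ (qiter_memF P hF hφF k)) hfacts.2.2.2

end Aux4

section Aux5
set_option linter.unusedSectionVars false
set_option linter.unusedVariables false

variable {S : Type*} [MeasurableSpace S]
variable {P : Kernel S (S × S)} [IsMarkovKernel P] {ν : Measure S} [IsProbabilityMeasure ν]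
variable {F : Set (S → ℝ)} {μ : Measure S}

lemma uniform_qiter_bound (hF : AssumpF P ν F) {α : ℝ} (hα : α = (Real.sqrt 2)⁻¹)
    {J : Type*} [Fintype J] [DecidableEq J] {αj : J → ℂ} {R : J → (S → ℂ) → S → ℂ}
    {β : ℕ → ℝ} (hH3 : AssumpH3 P F μ α αj R β)
    {φ : S → ℝ} (hφF : φ ∈ F) :
    ∃ B : ℝ, ∀ k : ℕ, ∫ x, Qiter P k φ x ∂ν ≤ B := by
  classical
  have hsqrt2 : (1 : ℝ) ≤ Real.sqrt 2 := by
    rw [show (1 : ℝ) = Real.sqrt 1 from Real.sqrt_one.symm]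
    exact Real.sqrt_le_sqrt (by norm_num)
  have hα0 : 0 < α := by rw [hα]; positivity
  have hα1 : α ≤ 1 := by rw [hα]; exact inv_le_one_of_one_le₀ hsqrt2
  have hαC : (α : ℂ) ≠ 0 := by exact_mod_cast hα0.ne'
  obtain ⟨g₂, hg₂F, herg⟩ := hH3.erg φ hφF
  set c := mInt μ φ with hc
  set θ : J → ℂ := fun j => αj j / (α : ℂ) with hθ
  set S' : ℕ → S → ℂ := fun t x => ∑ j, θ j ^ t * R j (cf φ) x with hS'
  have herg' : ∀ (n : ℕ) (x : S),
      ‖(Qiter P n φ x : ℂ) - (c : ℂ) - (α : ℂ) ^ n * S' n x‖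
        ≤ β n * α ^ n * g₂ x := by
    intro n x
    have h := herg n x
    rw [qiterC_cf] at h
    exact h
  have hg₂0 : ∀ x, 0 ≤ g₂ x := by
    intro x
    have h := herg' 0 x
    have h2 := (norm_nonneg _).trans h
    simp only [pow_zero, mul_one] at h2
    by_contra hneg
    push_neg at hneg
    nlinarith [mul_pos (hH3.βpos 0) (neg_pos.mpr hneg)]
  -- |S' t x| in terms of data
  have habsS' : ∀ (t : ℕ) (x : S),
      α ^ t * ‖S' t x‖ ≤ |Qiter P t φ x - c| + β t * α ^ t * g₂ x := by
    intro t x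
    have h := herg' t x
    have heq : (α : ℂ) ^ t * S' t x
        = ((Qiter P t φ x - c : ℝ) : ℂ)
          - ((Qiter P t φ x : ℂ) - (c : ℂ) - (α : ℂ) ^ t * S' t x) := by
      push_cast; ring
    calc α ^ t * ‖S' t x‖
        = ‖(α : ℂ) ^ t * S' t x‖ := by
          rw [norm_mul, norm_pow, Complex.norm_real, Real.norm_eq_abs, abs_of_pos hα0]
      _ = ‖((Qiter P t φ x - c : ℝ) : ℂ)
          - ((Qiter P t φ x : ℂ) - (c : ℂ) - (α : ℂ) ^ t * S' t x)‖ :=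
          congrArg norm heq
      _ ≤ ‖((Qiter P t φ x - c : ℝ) : ℂ)‖
          + ‖(Qiter P t φ x : ℂ) - (c : ℂ) - (α : ℂ) ^ t * S' t x‖ :=
          norm_sub_le _ _
      _ ≤ |Qiter P t φ x - c| + β t * α ^ t * g₂ x := by
          rw [Complex.norm_real, Real.norm_eq_abs]; exact add_le_add le_rfl h
  -- Lagrange interpolation: recover each `R j (cf φ)` from the `S' t`, `t < card J`
  have hd1 : 1 ≤ Fintype.card J := Fintype.card_pos_iff.mpr hH3.nonempty
  set d := Fintype.card J with hd
  have hθinj : Function.Injective θ := by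
    intro a b hab
    apply hH3.inj
    have h2 := congrArg (fun z => z * (α : ℂ)) hab
    rw [hθ] at h2
    simpa [div_mul_cancel₀, hαC] using h2
  have hθabs : ∀ j, ‖θ j‖ = 1 := by
    intro j
    rw [hθ]
    simp only
    rw [norm_div, hH3.abs_eq, Complex.norm_real, Real.norm_eq_abs, abs_of_pos hα0, div_self hα0.ne']
  have hLag : ∀ j : J, ∃ co : ℕ → ℂ,
      ∀ x, R j (cf φ) x = ∑ t ∈ Finset.range d, co t * S' t x := by
    intro j
    set pol := Lagrange.basis Finset.univ θ j with hpol
    have hInj : Set.InjOn θ ↑(Finset.univ : Finset J) := Function.Injective.injOn hθinj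
    have hdeg : pol.natDegree < d := by
      have hdeg' := Lagrange.degree_basis hInj (Finset.mem_univ j)
      have h2 : pol.natDegree = (Finset.univ : Finset J).card - 1 :=
        Polynomial.natDegree_eq_of_degree_eq_some hdeg'
      rw [h2, Finset.card_univ]
      omega
    refine ⟨fun t => pol.coeff t, fun x => ?_⟩
    have heval : ∀ j' : J, pol.eval (θ j') = if j' = j then 1 else 0 := by
      intro j'
      by_cases hjj : j' = j
      · subst hjj; rw [if_pos rfl]
        exact Lagrange.eval_basis_self hInj (Finset.mem_univ _)
      · rw [if_neg hjj]
        exact Lagrange.eval_basis_of_ne (Ne.symm hjj) (Finset.mem_univ _)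
    calc R j (cf φ) x
        = ∑ j' : J, (if j' = j then (1 : ℂ) else 0) * R j' (cf φ) x := by
          simp [ite_mul]
      _ = ∑ j' : J, pol.eval (θ j') * R j' (cf φ) x := by
          exact Finset.sum_congr rfl fun j' _ => by rw [heval j']
      _ = ∑ j' : J, (∑ t ∈ Finset.range d, pol.coeff t * θ j' ^ t) * R j' (cf φ) x := by
          exact Finset.sum_congr rfl fun j' _ => by
            rw [Polynomial.eval_eq_sum_range' hdeg]
      _ = ∑ t ∈ Finset.range d, pol.coeff t * S' t x := by
          simp only [hS']
          simp_rw [Finset.sum_mul, Finset.mul_sum]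
          rw [Finset.sum_comm]
          exact Finset.sum_congr rfl fun t _ => Finset.sum_congr rfl fun j' _ => by ring
  choose co hco using hLag
  set G : S → ℝ := fun x => c + (∑ j : J, ∑ t ∈ Finset.range d,
      ‖co j t‖ * ((α ^ t)⁻¹ * (|Qiter P t φ x - c| + β t * α ^ t * g₂ x)))
      + g₂ x with hG
  have hRj_bound : ∀ (j : J) (x : S), ‖R j (cf φ) x‖
      ≤ ∑ t ∈ Finset.range d, ‖co j t‖
        * ((α ^ t)⁻¹ * (|Qiter P t φ x - c| + β t * α ^ t * g₂ x)) := by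
    intro j x
    rw [hco j x]
    refine (norm_sum_le _ _).trans (Finset.sum_le_sum fun t _ => ?_)
    rw [norm_mul]
    refine mul_le_mul_of_nonneg_left ?_ (norm_nonneg _)
    have h := habsS' t x
    rw [mul_comm] at h
    rw [inv_mul_eq_div, le_div_iff₀ (pow_pos hα0 t)]
    exact h
  have hSk_bound : ∀ (k : ℕ) (x : S),
      ‖S' k x‖ ≤ ∑ j : J, ‖R j (cf φ) x‖ := by
    intro k x
    refine (norm_sum_le _ _).trans (Finset.sum_le_sum fun j _ => ?_)
    rw [norm_mul, norm_pow, hθabs j, one_pow, one_mul]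
  have hGbound : ∀ (k : ℕ) (x : S), Qiter P k φ x ≤ G x := by
    intro k x
    have h1 := herg' k x
    have h2 : Qiter P k φ x - c ≤ ‖(Qiter P k φ x : ℂ) - (c : ℂ)‖ := by
      rw [show ((Qiter P k φ x : ℂ) - (c : ℂ)) = ((Qiter P k φ x - c : ℝ) : ℂ) by push_cast; ring,
        Complex.norm_real, Real.norm_eq_abs]
      exact le_abs_self _
    have h3 : ‖(Qiter P k φ x : ℂ) - (c : ℂ)‖
        ≤ β k * α ^ k * g₂ x + ‖(α : ℂ) ^ k * S' k x‖ := by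
      calc ‖(Qiter P k φ x : ℂ) - (c : ℂ)‖
          = ‖((Qiter P k φ x : ℂ) - (c : ℂ) - (α : ℂ) ^ k * S' k x)
              + (α : ℂ) ^ k * S' k x‖ := by congr 1; ring
        _ ≤ ‖(Qiter P k φ x : ℂ) - (c : ℂ) - (α : ℂ) ^ k * S' k x‖
            + ‖(α : ℂ) ^ k * S' k x‖ := norm_add_le _ _
        _ ≤ _ := add_le_add h1 le_rfl
    have h4 : ‖(α : ℂ) ^ k * S' k x‖ ≤ ‖S' k x‖ := by
      rw [norm_mul, norm_pow, Complex.norm_real, Real.norm_eq_abs, abs_of_pos hα0]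
      exact mul_le_of_le_one_left (norm_nonneg _) (pow_le_one₀ hα0.le hα1)
    have h5 : β k * α ^ k * g₂ x ≤ g₂ x := by
      have hb1 : β k * α ^ k ≤ 1 :=
        mul_le_one₀ (hH3.βle k) (pow_nonneg hα0.le k) (pow_le_one₀ hα0.le hα1)
      calc β k * α ^ k * g₂ x ≤ 1 * g₂ x :=
            mul_le_mul_of_nonneg_right hb1 (hg₂0 x)
        _ = g₂ x := one_mul _
    have h6 := (hSk_bound k x).trans (Finset.sum_le_sum fun j _ => hRj_bound j x)
    have h7 : Qiter P k φ x ≤ c + ‖S' k x‖ + g₂ x := by linarith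
    rw [hG]
    simp only
    have h8 := h6
    linarith
  refine ⟨∫ x, G x ∂ν, fun k => ?_⟩
  have hGint : Integrable G ν := by
    rw [hG]
    refine Integrable.add (Integrable.add (integrable_const c) ?_) (hF.int_nu g₂ hg₂F)
    refine integrable_finset_sum _ fun j _ => integrable_finset_sum _ fun t _ => ?_
    refine Integrable.const_mul (Integrable.const_mul ?_ _) _
    exact (((hF.int_nu _ (qiter_memF P hF hφF t)).sub (integrable_const c)).abs).add
      ((hF.int_nu g₂ hg₂F).const_mul _)
  exact integral_mono (hF.int_nu _ (qiter_memF P hF hφF k)) hGint (hGbound k)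

end Aux5

section Aux6
set_option linter.unusedSectionVars false
set_option linter.unusedVariables false

variable {S : Type*} [MeasurableSpace S] {Ω : Type*} [MeasurableSpace Ω]
variable {P : Kernel S (S × S)} [IsMarkovKernel P] {ν : Measure S} [IsProbabilityMeasure ν]
variable {m : Measure Ω} [IsProbabilityMeasure m] {X : List Bool → Ω → S}
variable {F : Set (S → ℝ)}

lemma lintegral_weighted_sum_le (hBMC : IsBMC P ν m X) (hF : AssumpF P ν F)
    {φ : S → ℝ} (hφF : φ ∈ F) (hφ0 : ∀ x, 0 ≤ φ x)
    {B : ℝ} (hB : ∀ k, ∫ x, Qiter P k φ x ∂ν ≤ B)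
    (q : ℕ) {c : ℝ} (hc : 0 ≤ c) :
    ∫⁻ ω, ENNReal.ofReal (c * ∑ k ∈ Finset.range q,
        2 ^ k * ∑ i ∈ gen k, φ (X i ω)) ∂m
      ≤ ENNReal.ofReal (c * ((q : ℝ) * (4 ^ q * B))) := by
  have hφm : Measurable φ := hF.meas φ hφF
  have hWmeas : ∀ k : ℕ, Measurable fun ω => ∑ i ∈ gen k, φ (X i ω) := fun k =>
    Finset.measurable_sum _ fun i _ => hφm.comp (hBMC.meas i)
  have hW0 : ∀ (k : ℕ) (ω : Ω), 0 ≤ ∑ i ∈ gen k, φ (X i ω) := fun k ω =>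
    Finset.sum_nonneg fun i _ => hφ0 _
  have hB0 : 0 ≤ B := by
    refine le_trans ?_ (hB 0)
    rw [qiter_zero]
    exact integral_nonneg hφ0
  -- rewrite the ofReal of the product/sum
  have hsplit : ∀ ω : Ω, ENNReal.ofReal (c * ∑ k ∈ Finset.range q,
      2 ^ k * ∑ i ∈ gen k, φ (X i ω))
      = ENNReal.ofReal c * ∑ k ∈ Finset.range q,
          ENNReal.ofReal ((2:ℝ) ^ k) * ENNReal.ofReal (∑ i ∈ gen k, φ (X i ω)) := by
    intro ω
    rw [ENNReal.ofReal_mul hc, ENNReal.ofReal_sum_of_nonneg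
      (fun k _ => mul_nonneg (by positivity) (hW0 k ω))]
    congr 1
    refine Finset.sum_congr rfl fun k _ => ?_
    rw [ENNReal.ofReal_mul (by positivity)]
  calc ∫⁻ ω, ENNReal.ofReal (c * ∑ k ∈ Finset.range q,
          2 ^ k * ∑ i ∈ gen k, φ (X i ω)) ∂m
      = ∫⁻ ω, ENNReal.ofReal c * ∑ k ∈ Finset.range q,
          ENNReal.ofReal ((2:ℝ) ^ k) * ENNReal.ofReal (∑ i ∈ gen k, φ (X i ω)) ∂m := by
        exact lintegral_congr hsplit
    _ = ENNReal.ofReal c * ∑ k ∈ Finset.range q, ENNReal.ofReal ((2:ℝ) ^ k)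
          * ∫⁻ ω, ENNReal.ofReal (∑ i ∈ gen k, φ (X i ω)) ∂m := by
        rw [lintegral_const_mul _ (Finset.measurable_sum _ fun k _ =>
          ((hWmeas k).ennreal_ofReal.const_mul _))]
        congr 1
        rw [lintegral_finset_sum _ fun k _ => (hWmeas k).ennreal_ofReal.const_mul _]
        exact Finset.sum_congr rfl fun k _ =>
          lintegral_const_mul _ (hWmeas k).ennreal_ofReal
    _ ≤ ENNReal.ofReal c * ∑ k ∈ Finset.range q, ENNReal.ofReal ((4:ℝ) ^ q * B) := by
        refine mul_le_mul_right (Finset.sum_le_sum fun k hk => ?_) _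
        have h1 : ∫⁻ ω, ENNReal.ofReal (∑ i ∈ gen k, φ (X i ω)) ∂m
            ≤ ENNReal.ofReal (2 ^ k * ∫ x, Qiter P k φ x ∂ν) :=
          lintegral_gen_le hBMC hF hφF hφ0 k
        calc ENNReal.ofReal ((2:ℝ) ^ k)
              * ∫⁻ ω, ENNReal.ofReal (∑ i ∈ gen k, φ (X i ω)) ∂m
            ≤ ENNReal.ofReal ((2:ℝ) ^ k) * ENNReal.ofReal (2 ^ k * ∫ x, Qiter P k φ x ∂ν) :=
              mul_le_mul_right h1 _
          _ = ENNReal.ofReal ((2:ℝ) ^ k * (2 ^ k * ∫ x, Qiter P k φ x ∂ν)) :=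
              (ENNReal.ofReal_mul (by positivity)).symm
          _ ≤ ENNReal.ofReal ((4:ℝ) ^ q * B) := by
              apply ENNReal.ofReal_le_ofReal
              have hqk : (k : ℕ) < q := Finset.mem_range.mp hk
              have h2 : (2:ℝ) ^ k * (2 ^ k * ∫ x, Qiter P k φ x ∂ν)
                  ≤ (2:ℝ) ^ k * (2 ^ k * B) :=
                mul_le_mul_of_nonneg_left
                  (mul_le_mul_of_nonneg_left (hB k) (by positivity)) (by positivity)
              refine h2.trans ?_
              have h3 : (2:ℝ) ^ k * 2 ^ k = 4 ^ k := by
                rw [← mul_pow]; norm_num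
              rw [← mul_assoc, h3]
              exact mul_le_mul_of_nonneg_right
                (pow_le_pow_right₀ (by norm_num) hqk.le) hB0
    _ = ENNReal.ofReal c * ((q : ℕ) * ENNReal.ofReal ((4:ℝ) ^ q * B)) := by
        rw [Finset.sum_const, Finset.card_range, nsmul_eq_mul]
    _ = ENNReal.ofReal (c * ((q : ℝ) * (4 ^ q * B))) := by
        rw [ENNReal.ofReal_mul hc, ENNReal.ofReal_mul (by positivity : (0:ℝ) ≤ (q:ℝ))]
        rw [ENNReal.ofReal_natCast]

lemma tendsto_sq_div_pow_half : Tendsto (fun n : ℕ => (n : ℝ) ^ 2 / 2 ^ (n / 2)) atTop (𝓝 0) := by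
  have hr : ‖(1/2 : ℝ)‖ < 1 := by
    rw [Real.norm_eq_abs, abs_of_pos (by norm_num : (0:ℝ) < 1/2)]
    norm_num
  have hs1 : Summable (fun m : ℕ => 4 * ((m : ℝ) ^ 2 * (1/2 : ℝ) ^ m)) :=
    (summable_pow_mul_geometric_of_norm_lt_one 2 hr).mul_left 4
  have hs2 : Summable (fun m : ℕ => 4 * ((m : ℝ) ^ 1 * (1/2 : ℝ) ^ m)) :=
    (summable_pow_mul_geometric_of_norm_lt_one 1 hr).mul_left 4
  have hs3 : Summable (fun m : ℕ => (1/2 : ℝ) ^ m) :=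
    summable_geometric_of_lt_one (by norm_num) (by norm_num)
  have hs : Summable (fun m : ℕ => (2 * (m : ℝ) + 1) ^ 2 * (1/2 : ℝ) ^ m) := by
    have he : (fun m : ℕ => (2 * (m : ℝ) + 1) ^ 2 * (1/2 : ℝ) ^ m)
        = fun m : ℕ => 4 * ((m : ℝ) ^ 2 * (1/2 : ℝ) ^ m)
          + (4 * ((m : ℝ) ^ 1 * (1/2 : ℝ) ^ m) + (1/2 : ℝ) ^ m) := by
      funext m; ring
    rw [he]
    exact hs1.add (hs2.add hs3)
  have htend : Tendsto (fun m : ℕ => (2 * (m : ℝ) + 1) ^ 2 * (1/2 : ℝ) ^ m) atTop (𝓝 0) :=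
    hs.tendsto_atTop_zero
  have hdiv : Tendsto (fun n : ℕ => n / 2) atTop atTop :=
    Filter.tendsto_atTop_atTop.mpr fun b => ⟨2 * b + 2, fun a ha => by omega⟩
  have hcomp : Tendsto (fun n : ℕ => (2 * ((n / 2 : ℕ) : ℝ) + 1) ^ 2 * (1/2 : ℝ) ^ (n / 2))
      atTop (𝓝 0) := htend.comp hdiv
  refine squeeze_zero (fun n => by positivity) (fun n => ?_) hcomp
  have h1 : (n : ℝ) ≤ 2 * ((n / 2 : ℕ) : ℝ) + 1 := by
    have : n ≤ 2 * (n / 2) + 1 := by omega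
    exact_mod_cast this
  have h2 : (n : ℝ) ^ 2 ≤ (2 * ((n / 2 : ℕ) : ℝ) + 1) ^ 2 :=
    pow_le_pow_left₀ (Nat.cast_nonneg n) h1 2
  calc (n : ℝ) ^ 2 / 2 ^ (n / 2) = (n : ℝ) ^ 2 * (1/2 : ℝ) ^ (n / 2) := by
        rw [div_eq_mul_inv, ← inv_pow, one_div]
    _ ≤ (2 * ((n / 2 : ℕ) : ℝ) + 1) ^ 2 * (1/2 : ℝ) ^ (n / 2) :=
        mul_le_mul_of_nonneg_right h2 (by positivity)

end Aux6

/-- **Lemma (critical: the remainder `R₀` vanishes at speed `n⁻¹` in `L²`).** -/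
theorem critical_R0
    {S : Type*} [MeasurableSpace S] {Ω : Type*} [MeasurableSpace Ω]
    (P : Kernel S (S × S)) [IsMarkovKernel P]
    (ν : Measure S) [IsProbabilityMeasure ν]
    (m : Measure Ω) [IsProbabilityMeasure m]
    (X : List Bool → Ω → S) (hBMC : IsBMC P ν m X)
    (F : Set (S → ℝ)) (hF : AssumpF P ν F)
    (μ : Measure S) (α : ℝ) (hα : α = (Real.sqrt 2)⁻¹)
    {J : Type*} [Fintype J] [DecidableEq J]
    (αj : J → ℂ) (R : J → (S → ℂ) → S → ℂ) (β : ℕ → ℝ)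
    (hH3 : AssumpH3 P F μ α αj R β)
    (𝔣 : ℕ → S → ℝ) (h𝔣 : ∀ ℓ, 𝔣 ℓ ∈ F)
    (g : S → ℝ) (hg : g ∈ F) (hunif : UnifH3 P μ α R β 𝔣 g)
    (p : ℕ → ℕ) (hp_mono : Monotone p) (hp_pos : ∀ n, 1 ≤ p n)
    (hp_lt : ∀ᶠ n in atTop, p n < n)
    (hp_ratio : Tendsto (fun n => (p n : ℝ) / n) atTop (𝓝 1))
    (hp_log : ∀ lam : ℝ, 0 < lam →
      Tendsto (fun n : ℕ => (n : ℝ) - p n - lam * Real.log n) atTop atTop) :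
    Tendsto (fun n : ℕ => (n : ℝ)⁻¹ * ∫ ω,
        ((Real.sqrt (2 ^ n))⁻¹ *
          ∑ k ∈ Finset.range (n - p n), MA X (gen k) (ctr μ (𝔣 (n - k))) ω) ^ 2 ∂m)
      atTop (𝓝 0) := by
  classical
  -- nonnegativity of `g` and pointwise domination of the centered functions
  have hg0 : ∀ x, 0 ≤ g x := fun x => le_trans (norm_nonneg _) ((hunif 0 0 x).1)
  have hctr : ∀ (ℓ : ℕ) (x : S), |ctr μ (𝔣 ℓ) x| ≤ g x := by
    intro ℓ x
    have h := (hunif 0 ℓ x).2.1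
    rw [pow_zero, one_mul] at h
    have he : QiterC P 0 (cf (ctr μ (𝔣 ℓ))) x = ((ctr μ (𝔣 ℓ) x : ℝ) : ℂ) := rfl
    rw [he, Complex.norm_real, Real.norm_eq_abs] at h
    exact h
  have hctrmeas : ∀ ℓ : ℕ, Measurable (ctr μ (𝔣 ℓ)) := fun ℓ =>
    (hF.meas _ (h𝔣 ℓ)).sub measurable_const
  set φ : S → ℝ := fun x => g x ^ 2 with hφ
  have hφF : φ ∈ F := hF.sq_mem g hg
  have hφ0 : ∀ x, 0 ≤ φ x := fun x => sq_nonneg _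
  obtain ⟨B, hB⟩ := uniform_qiter_bound hF hα hH3 hφF
  have hB0 : 0 ≤ B := le_trans (by rw [qiter_zero]; exact integral_nonneg hφ0) (hB 0)
  -- measurability of the integrand
  have hYmeas : ∀ n : ℕ, Measurable fun ω => ((Real.sqrt (2 ^ n))⁻¹ *
      ∑ k ∈ Finset.range (n - p n), MA X (gen k) (ctr μ (𝔣 (n - k))) ω) ^ 2 := by
    intro n
    apply Measurable.pow_const
    apply Measurable.const_mul
    refine Finset.measurable_sum _ fun k _ => ?_
    exact Finset.measurable_sum (gen k)
      (f := fun i ω => ctr μ (𝔣 (n - k)) (X i ω))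
      fun i _ => (hctrmeas _).comp (hBMC.meas i)
  -- pointwise bound of the square by the weighted sum of `φ` over generations
  have hptwise : ∀ (n : ℕ) (ω : Ω),
      ((Real.sqrt (2 ^ n))⁻¹ * ∑ k ∈ Finset.range (n - p n),
          MA X (gen k) (ctr μ (𝔣 (n - k))) ω) ^ 2
      ≤ (((2:ℝ) ^ n)⁻¹ * ((n - p n : ℕ) : ℝ)) * ∑ k ∈ Finset.range (n - p n),
          2 ^ k * ∑ i ∈ gen k, φ (X i ω) := by
    intro n ω
    simp only [MA]
    set T := ∑ k ∈ Finset.range (n - p n), ∑ i ∈ gen k, ctr μ (𝔣 (n - k)) (X i ω) with hT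
    set U := ∑ k ∈ Finset.range (n - p n), ∑ i ∈ gen k, g (X i ω) with hU
    have hTU : |T| ≤ U := by
      rw [hT, hU]
      refine (Finset.abs_sum_le_sum_abs _ _).trans (Finset.sum_le_sum fun k _ => ?_)
      refine (Finset.abs_sum_le_sum_abs _ _).trans (Finset.sum_le_sum fun i _ => ?_)
      exact hctr _ _
    have hsq : ((Real.sqrt (2 ^ n))⁻¹ * T) ^ 2 = ((2:ℝ) ^ n)⁻¹ * T ^ 2 := by
      rw [mul_pow, inv_pow, Real.sq_sqrt (by positivity)]
    have h1 : T ^ 2 ≤ U ^ 2 := by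
      rw [← sq_abs T]
      exact pow_le_pow_left₀ (abs_nonneg T) hTU 2
    have h2 : U ^ 2 ≤ ((n - p n : ℕ) : ℝ) * ∑ k ∈ Finset.range (n - p n),
        2 ^ k * ∑ i ∈ gen k, φ (X i ω) := by
      rw [hU]
      refine le_trans sq_sum_le_card_mul_sum_sq ?_
      rw [Finset.card_range]
      refine mul_le_mul_of_nonneg_left (Finset.sum_le_sum fun k _ => ?_) (Nat.cast_nonneg _)
      refine le_trans sq_sum_le_card_mul_sum_sq ?_
      rw [gen_card]
      push_cast
      exact le_of_eq rfl
    rw [hsq]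
    calc ((2:ℝ) ^ n)⁻¹ * T ^ 2 ≤ ((2:ℝ) ^ n)⁻¹ * (((n - p n : ℕ) : ℝ)
          * ∑ k ∈ Finset.range (n - p n), 2 ^ k * ∑ i ∈ gen k, φ (X i ω)) :=
          mul_le_mul_of_nonneg_left (h1.trans h2) (by positivity)
      _ = _ := by ring
  -- bound of the integral, for every n
  have hIle : ∀ n : ℕ, (∫ ω, ((Real.sqrt (2 ^ n))⁻¹ *
      ∑ k ∈ Finset.range (n - p n), MA X (gen k) (ctr μ (𝔣 (n - k))) ω) ^ 2 ∂m)
      ≤ (((2:ℝ) ^ n)⁻¹ * ((n - p n : ℕ) : ℝ))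
        * (((n - p n : ℕ) : ℝ) * (4 ^ (n - p n) * B)) := by
    intro n
    have hD0 : 0 ≤ (((2:ℝ) ^ n)⁻¹ * ((n - p n : ℕ) : ℝ))
        * (((n - p n : ℕ) : ℝ) * (4 ^ (n - p n) * B)) :=
      mul_nonneg (by positivity)
        (mul_nonneg (Nat.cast_nonneg _) (mul_nonneg (by positivity) hB0))
    rw [integral_eq_lintegral_of_nonneg_ae (ae_of_all _ fun ω => sq_nonneg _)
      (hYmeas n).aestronglyMeasurable]
    refine ENNReal.toReal_le_of_le_ofReal hD0 ?_
    exact le_trans (lintegral_mono fun ω => ENNReal.ofReal_le_ofReal (hptwise n ω))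
      (lintegral_weighted_sum_le hBMC hF hφF hφ0 hB (n - p n) (by positivity))
  -- eventual inequality `8 (n - p n) ≤ n`
  have hev1 : ∀ᶠ n : ℕ in atTop, (7/8 : ℝ) ≤ (p n : ℝ) / n :=
    hp_ratio.eventually (eventually_ge_nhds (by norm_num : (7/8 : ℝ) < 1))
  have hev : ∀ᶠ n : ℕ in atTop, 8 * (n - p n) ≤ n := by
    filter_upwards [hev1, hp_lt, eventually_ge_atTop 1] with n h78 hlt h1
    have hn0 : (0:ℝ) < n := by exact_mod_cast h1
    have h2 : (7/8 : ℝ) * n ≤ p n := (le_div_iff₀ hn0).mp h78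
    have h3 : ((8 * (n - p n) : ℕ) : ℝ) ≤ (n : ℝ) := by
      push_cast [Nat.cast_sub hlt.le]
      linarith
    exact_mod_cast h3
  -- squeeze
  have hE : Tendsto (fun n : ℕ => B * ((n : ℝ) ^ 2 / 2 ^ (n / 2))) atTop (𝓝 0) := by
    simpa using tendsto_sq_div_pow_half.const_mul B
  refine squeeze_zero' ?_ ?_ hE
  · exact Filter.Eventually.of_forall fun n =>
      mul_nonneg (by positivity) (integral_nonneg fun ω => sq_nonneg _)
  · filter_upwards [hev, eventually_ge_atTop 1] with n h8 h1
    have hinv1 : ((n : ℝ))⁻¹ ≤ 1 := by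
      rw [inv_le_one_iff₀]
      right
      exact_mod_cast h1
    have hI0 : 0 ≤ ∫ ω, ((Real.sqrt (2 ^ n))⁻¹ *
        ∑ k ∈ Finset.range (n - p n), MA X (gen k) (ctr μ (𝔣 (n - k))) ω) ^ 2 ∂m :=
      integral_nonneg fun ω => sq_nonneg _
    have hA1 : (n : ℝ)⁻¹ * ∫ ω, ((Real.sqrt (2 ^ n))⁻¹ *
        ∑ k ∈ Finset.range (n - p n), MA X (gen k) (ctr μ (𝔣 (n - k))) ω) ^ 2 ∂m
        ≤ ∫ ω, ((Real.sqrt (2 ^ n))⁻¹ *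
        ∑ k ∈ Finset.range (n - p n), MA X (gen k) (ctr μ (𝔣 (n - k))) ω) ^ 2 ∂m := by
      calc (n : ℝ)⁻¹ * _ ≤ 1 * _ := mul_le_mul_of_nonneg_right hinv1 hI0
        _ = _ := one_mul _
    refine hA1.trans ((hIle n).trans ?_)
    -- arithmetic comparison with `B * n² / 2^(n/2)`
    have hq_le : ((n - p n : ℕ) : ℝ) ≤ (n : ℝ) := Nat.cast_le.2 (Nat.sub_le n (p n))
    have hpow : (4:ℝ) ^ (n - p n) / 2 ^ n ≤ 1 / 2 ^ (n / 2) := by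
      rw [show (4:ℝ) = 2 ^ 2 by norm_num, ← pow_mul,
        div_le_div_iff₀ (by positivity) (by positivity), one_mul, ← pow_add]
      exact pow_le_pow_right₀ (by norm_num) (by omega)
    have heq1 : (((2:ℝ) ^ n)⁻¹ * ((n - p n : ℕ) : ℝ))
        * (((n - p n : ℕ) : ℝ) * (4 ^ (n - p n) * B))
        = B * (((n - p n : ℕ) : ℝ) * ((n - p n : ℕ) : ℝ))
          * ((4:ℝ) ^ (n - p n) / 2 ^ n) := by
      field_simp
    rw [heq1]
    have hstep1 : B * (((n - p n : ℕ) : ℝ) * ((n - p n : ℕ) : ℝ)) ≤ B * ((n:ℝ) * n) :=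
      mul_le_mul_of_nonneg_left
        (mul_le_mul hq_le hq_le (Nat.cast_nonneg _) (Nat.cast_nonneg _)) hB0
    calc B * (((n - p n : ℕ) : ℝ) * ((n - p n : ℕ) : ℝ)) * ((4:ℝ) ^ (n - p n) / 2 ^ n)
        ≤ B * ((n:ℝ) * n) * (1 / 2 ^ (n / 2)) :=
          mul_le_mul hstep1 hpow (by positivity)
            (mul_nonneg hB0 (mul_nonneg (Nat.cast_nonneg _) (Nat.cast_nonneg _)))
      _ = B * ((n : ℝ) ^ 2 / 2 ^ (n / 2)) := by ring

end BMC
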